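/- Let f, f₁, …, f_C : ℝⁿ → ℝ be differentiable with f = (1/C)∑ᵢ fᵢ, each ∇fᵢ L-Lipschitz, and suppose (1/C)∑_{i=1}^C ‖∇fᵢ(x) − ∇f(x)‖² ≤ s² for all x. Then for any points y, x₁, …, x_C ∈ ℝⁿ with δ := (1/C)∑_{i=1}^C ‖xᵢ − y‖², we have (1/C)∑_{i=1}^C ‖∇fᵢ(xᵢ)‖² ≤ 12L²δ + 8s² + 2‖(1/C)∑_{j=1}^C ∇f_j(x_j)‖². -/

import Mathlib

set_option maxHeartbeats 1000000

open Finset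

private lemma sq_norm_split {E : Type*} [NormedAddCommGroup E] (a b : E) :
    ‖a‖ ^ 2 ≤ 2 * ‖a - b‖ ^ 2 + 2 * ‖b‖ ^ 2 := by
  have h : ‖a‖ ≤ ‖a - b‖ + ‖b‖ := by
    have := norm_add_le (a - b) b
    simpa using this
  nlinarith [norm_nonneg (a - b), norm_nonneg b, norm_nonneg a,
    sq_nonneg (‖a - b‖ - ‖b‖)]

theorem lemma_one {n C : ℕ} (hC : 0 < C) (L s : ℝ) (hL : 0 ≤ L)
    (f : Fin C → EuclideanSpace ℝ (Fin n) → ℝ)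
    (g : Fin C → EuclideanSpace ℝ (Fin n) → EuclideanSpace ℝ (Fin n))
    (gf : EuclideanSpace ℝ (Fin n) → EuclideanSpace ℝ (Fin n))
    (hgrad : ∀ i x, HasGradientAt (f i) (g i x) x)
    (hf : ∀ x, HasGradientAt (fun z => (1 / (C : ℝ)) * ∑ i, f i z) (gf x) x)
    (hLip : ∀ i u v, ‖g i u - g i v‖ ≤ L * ‖u - v‖)
    (hs : ∀ x, (1 / (C : ℝ)) * ∑ i, ‖g i x - gf x‖ ^ 2 ≤ s ^ 2)
    (y : EuclideanSpace ℝ (Fin n)) (x : Fin C → EuclideanSpace ℝ (Fin n)) :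
    (1 / (C : ℝ)) * ∑ i, ‖g i (x i)‖ ^ 2
      ≤ 12 * L ^ 2 * ((1 / (C : ℝ)) * ∑ i, ‖x i - y‖ ^ 2) + 8 * s ^ 2
        + 2 * ‖(1 / (C : ℝ)) • ∑ j, g j (x j)‖ ^ 2 := by
  have hCpos : (0 : ℝ) < (C : ℝ) := by exact_mod_cast hC
  set A : EuclideanSpace ℝ (Fin n) := (1 / (C : ℝ)) • ∑ j, g j (x j) with hA
  -- gf y = average of g i y
  have hgf : gf y = (1 / (C : ℝ)) • ∑ i, g i y := by
    have h2 : HasGradientAt (fun z => (1 / (C : ℝ)) * ∑ i, f i z)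
        ((1 / (C : ℝ)) • ∑ i, g i y) y := by
      rw [hasGradientAt_iff_hasFDerivAt]
      have hsum : HasFDerivAt (fun z => ∑ i, f i z)
          (∑ i, (InnerProductSpace.toDual ℝ _ (g i y) : _ →L[ℝ] ℝ)) y :=
        HasFDerivAt.fun_sum (fun i _ => (hgrad i y).hasFDerivAt)
      have := hsum.const_mul (1 / (C : ℝ))
      convert this using 1
      ext v
      simp [map_sum, Finset.mul_sum, ContinuousLinearMap.sum_apply]
      ext v
      simp [map_sum, Finset.mul_sum, ContinuousLinearMap.sum_apply, inner_smul_left, sum_inner]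
    exact (hf y).unique h2
  -- bound on ‖gf y - A‖²
  have havg : ‖gf y - A‖ ^ 2 ≤ L ^ 2 * ((1 / (C : ℝ)) * ∑ i, ‖x i - y‖ ^ 2) := by
    have hdiff : gf y - A = (1 / (C : ℝ)) • ∑ i, (g i y - g i (x i)) := by
      rw [hgf, hA, ← smul_sub, Finset.sum_sub_distrib]
    have h1 : ‖gf y - A‖ ≤ (1 / (C : ℝ)) * ∑ i, ‖g i y - g i (x i)‖ := by
      rw [hdiff, norm_smul]
      have hn : ‖(1 / (C : ℝ))‖ = 1 / (C : ℝ) := by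
        rw [Real.norm_eq_abs, abs_of_pos (by positivity)]
      rw [hn]
      exact mul_le_mul_of_nonneg_left (norm_sum_le _ _) (by positivity)
    have h2 : (∑ i, ‖g i y - g i (x i)‖) ^ 2
        ≤ (C : ℝ) * ∑ i, ‖g i y - g i (x i)‖ ^ 2 := by
      have := sq_sum_le_card_mul_sum_sq (s := Finset.univ)
        (f := fun i : Fin C => ‖g i y - g i (x i)‖)
      simpa using this
    have h3 : ∀ i : Fin C, ‖g i y - g i (x i)‖ ^ 2 ≤ L ^ 2 * ‖x i - y‖ ^ 2 := by
      intro i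
      have := hLip i y (x i)
      have h4 : ‖g i y - g i (x i)‖ ^ 2 ≤ (L * ‖y - x i‖) ^ 2 := by
        apply sq_le_sq' _ this
        nlinarith [norm_nonneg (g i y - g i (x i))]
      calc ‖g i y - g i (x i)‖ ^ 2 ≤ (L * ‖y - x i‖) ^ 2 := h4
        _ = L ^ 2 * ‖x i - y‖ ^ 2 := by rw [norm_sub_rev]; ring
    have h5 : ∑ i, ‖g i y - g i (x i)‖ ^ 2 ≤ ∑ i, L ^ 2 * ‖x i - y‖ ^ 2 :=
      Finset.sum_le_sum fun i _ => h3 i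
    have hnn : (0:ℝ) ≤ ∑ i, ‖g i y - g i (x i)‖ :=
      Finset.sum_nonneg fun i _ => norm_nonneg _
    calc ‖gf y - A‖ ^ 2 ≤ ((1 / (C : ℝ)) * ∑ i, ‖g i y - g i (x i)‖) ^ 2 := by
          apply sq_le_sq' _ h1
          nlinarith [norm_nonneg (gf y - A), mul_nonneg (le_of_lt (by positivity : (0:ℝ) < 1/(C:ℝ))) hnn]
      _ = (1 / (C : ℝ)) ^ 2 * (∑ i, ‖g i y - g i (x i)‖) ^ 2 := by ring
      _ ≤ (1 / (C : ℝ)) ^ 2 * ((C : ℝ) * ∑ i, ‖g i y - g i (x i)‖ ^ 2) := by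
          gcongr
      _ = (1 / (C : ℝ)) * ∑ i, ‖g i y - g i (x i)‖ ^ 2 := by
          field_simp
      _ ≤ (1 / (C : ℝ)) * ∑ i, L ^ 2 * ‖x i - y‖ ^ 2 :=
          mul_le_mul_of_nonneg_left h5 (by positivity)
      _ = L ^ 2 * ((1 / (C : ℝ)) * ∑ i, ‖x i - y‖ ^ 2) := by
          rw [← Finset.mul_sum]; ring
  -- pointwise bound
  have hpt : ∀ i : Fin C, ‖g i (x i)‖ ^ 2
      ≤ 4 * (L ^ 2 * ‖x i - y‖ ^ 2) + 8 * ‖g i y - gf y‖ ^ 2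
        + 8 * ‖gf y - A‖ ^ 2 + 2 * ‖A‖ ^ 2 := by
    intro i
    have e1 := sq_norm_split (g i (x i)) A
    have e2 := sq_norm_split (g i (x i) - A) (g i (x i) - g i y)
    have e3 := sq_norm_split (g i (x i) - A - (g i (x i) - g i y)) (g i y - gf y)
    have heq : g i (x i) - A - (g i (x i) - g i y) = g i y - A := by abel
    have heq2 : g i y - A - (g i y - gf y) = gf y - A := by abel
    rw [heq] at e2 e3
    rw [heq2] at e3
    have hlip : ‖g i (x i) - g i y‖ ^ 2 ≤ L ^ 2 * ‖x i - y‖ ^ 2 := by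
      have := hLip i (x i) y
      nlinarith [norm_nonneg (g i (x i) - g i y)]
    nlinarith
  -- sum up
  have hsum : ∑ i, ‖g i (x i)‖ ^ 2
      ≤ ∑ i, (4 * (L ^ 2 * ‖x i - y‖ ^ 2) + 8 * ‖g i y - gf y‖ ^ 2
        + 8 * ‖gf y - A‖ ^ 2 + 2 * ‖A‖ ^ 2) :=
    Finset.sum_le_sum fun i _ => hpt i
  have hsvar : (1 / (C : ℝ)) * ∑ i, ‖g i y - gf y‖ ^ 2 ≤ s ^ 2 := hs y
  have hexp : (1 / (C : ℝ)) * ∑ i, (4 * (L ^ 2 * ‖x i - y‖ ^ 2) + 8 * ‖g i y - gf y‖ ^ 2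
        + 8 * ‖gf y - A‖ ^ 2 + 2 * ‖A‖ ^ 2)
      = 4 * L ^ 2 * ((1 / (C : ℝ)) * ∑ i, ‖x i - y‖ ^ 2)
        + 8 * ((1 / (C : ℝ)) * ∑ i, ‖g i y - gf y‖ ^ 2)
        + 8 * ‖gf y - A‖ ^ 2 + 2 * ‖A‖ ^ 2 := by
    rw [Finset.sum_add_distrib, Finset.sum_add_distrib, Finset.sum_add_distrib,
      Finset.sum_const, Finset.sum_const, ← Finset.mul_sum, ← Finset.mul_sum,
      Finset.card_univ, Fintype.card_fin, nsmul_eq_mul, nsmul_eq_mul]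
    field_simp
    rw [← Finset.mul_sum]
  have hmul : (1 / (C : ℝ)) * ∑ i, ‖g i (x i)‖ ^ 2
      ≤ (1 / (C : ℝ)) * ∑ i, (4 * (L ^ 2 * ‖x i - y‖ ^ 2) + 8 * ‖g i y - gf y‖ ^ 2
        + 8 * ‖gf y - A‖ ^ 2 + 2 * ‖A‖ ^ 2) :=
    mul_le_mul_of_nonneg_left hsum (by positivity)
  rw [hexp] at hmul
  nlinarith [havg, hsvar]
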